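/- Let S take values in a finite set 𝒮, with group distributions P_s and labeling functions y_s : X → [0,1]. For any measurable classifier h : X → [0,1], max_{s∈𝒮} L_s(h) ≥ (1/(2(|𝒮|−1))) · max_{s∈𝒮} Σ_{s̄∈𝒮} ( E_{X∼P_s}[|y_s(X) − y_{s̄}(X)|] − D_TV(P_s, P_{s̄}) ). -/

import Mathlib

open MeasureTheory

/-- Group risk under ℓ₁ loss. -/
noncomputable def risk {X : Type*} [MeasurableSpace X]
    (P : Measure X) (y h : X → ℝ) : ℝ := ∫ x, |h x - y x| ∂P

/-- Total variation distance `sup_E |P₀(E) − P₁(E)|` over measurable sets. -/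
noncomputable def tvDist {X : Type*} [MeasurableSpace X] (P Q : Measure X) : ℝ :=
  sSup {d | ∃ E : Set X, MeasurableSet E ∧ d = |(P E).toReal - (Q E).toReal|}

lemma tv_bddAbove {X : Type*} [MeasurableSpace X] (P Q : Measure X)
    [IsProbabilityMeasure P] [IsProbabilityMeasure Q] :
    BddAbove {d | ∃ E : Set X, MeasurableSet E ∧ d = |(P E).toReal - (Q E).toReal|} := by
  refine ⟨1, fun d hd => ?_⟩
  obtain ⟨E, _, rfl⟩ := hd
  have h1 : (P E).toReal ≤ 1 := by
    have := prob_le_one (μ := P) (s := E)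
    simpa using ENNReal.toReal_le_of_le_ofReal zero_le_one (by simpa)
  have h2 : (Q E).toReal ≤ 1 := by
    have := prob_le_one (μ := Q) (s := E)
    simpa using ENNReal.toReal_le_of_le_ofReal zero_le_one (by simpa)
  have h3 : 0 ≤ (P E).toReal := ENNReal.toReal_nonneg
  have h4 : 0 ≤ (Q E).toReal := ENNReal.toReal_nonneg
  rw [abs_sub_le_iff]; constructor <;> linarith

lemma tv_nonneg {X : Type*} [MeasurableSpace X] (P Q : Measure X)
    [IsProbabilityMeasure P] [IsProbabilityMeasure Q] : 0 ≤ tvDist P Q := by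
  have : (0:ℝ) ∈ {d | ∃ E : Set X, MeasurableSet E ∧ d = |(P E).toReal - (Q E).toReal|} :=
    ⟨∅, MeasurableSet.empty, by simp⟩
  exact le_csSup (tv_bddAbove P Q) this

lemma tv_self {X : Type*} [MeasurableSpace X] (P : Measure X)
    [IsProbabilityMeasure P] : tvDist P P = 0 := by
  have : {d | ∃ E : Set X, MeasurableSet E ∧ d = |(P E).toReal - (P E).toReal|} = {0} := by
    ext d; simp only [Set.mem_setOf_eq, Set.mem_singleton_iff, sub_self, abs_zero]
    exact ⟨fun ⟨E, _, h⟩ => h, fun h => ⟨∅, MeasurableSet.empty, h⟩⟩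
  rw [tvDist, this, csSup_singleton]

lemma le_tv {X : Type*} [MeasurableSpace X] (P Q : Measure X)
    [IsProbabilityMeasure P] [IsProbabilityMeasure Q] {E : Set X} (hE : MeasurableSet E) :
    (P E).toReal - (Q E).toReal ≤ tvDist P Q :=
  (le_abs_self _).trans (le_csSup (tv_bddAbove P Q) ⟨E, hE, rfl⟩)

lemma integral_sub_le_tv {X : Type*} [MeasurableSpace X] (P Q : Measure X)
    [IsProbabilityMeasure P] [IsProbabilityMeasure Q] (g : X → ℝ) (hg : Measurable g)
    (h0 : ∀ x, 0 ≤ g x) (h1 : ∀ x, g x ≤ 1) :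
    ∫ x, g x ∂P ≤ (∫ x, g x ∂Q) + tvDist P Q := by
  have hint : ∀ (μ : Measure X) [IsProbabilityMeasure μ], Integrable g μ := by
    intro μ _
    exact ⟨hg.aestronglyMeasurable, HasFiniteIntegral.of_bounded
      (C := 1) (Filter.Eventually.of_forall fun x => by
        rw [Real.norm_eq_abs, abs_of_nonneg (h0 x)]; exact h1 x)⟩
  have hP := (hint P).integral_eq_integral_Ioc_meas_le (M := 1)
    (Filter.Eventually.of_forall h0) (Filter.Eventually.of_forall h1)
  have hQ := (hint Q).integral_eq_integral_Ioc_meas_le (M := 1)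
    (Filter.Eventually.of_forall h0) (Filter.Eventually.of_forall h1)
  rw [hP, hQ]
  have meas : ∀ (μ : Measure X), Measurable fun t : ℝ => (μ {a | t ≤ g a}).toReal := by
    intro μ
    have hanti : Antitone fun t : ℝ => μ {a | t ≤ g a} :=
      fun s t hst => measure_mono (fun a ha => hst.trans ha)
    exact hanti.measurable.ennreal_toReal
  have bdd : ∀ (μ : Measure X) [IsProbabilityMeasure μ],
      IntegrableOn (fun t : ℝ => (μ {a | t ≤ g a}).toReal) (Set.Ioc 0 1) := by
    intro μ _
    refine ⟨(meas μ).aestronglyMeasurable, HasFiniteIntegral.of_bounded (C := 1)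
      (Filter.Eventually.of_forall fun t => ?_)⟩
    rw [Real.norm_eq_abs, abs_of_nonneg ENNReal.toReal_nonneg]
    exact ENNReal.toReal_le_of_le_ofReal zero_le_one (by simpa using prob_le_one)
  have key : ∀ t ∈ Set.Ioc (0:ℝ) 1,
      (P {a | t ≤ g a}).toReal - (Q {a | t ≤ g a}).toReal ≤ tvDist P Q := by
    intro t _
    exact le_tv P Q (hg measurableSet_Ici)
  calc ∫ t in Set.Ioc (0:ℝ) 1, (P {a | t ≤ g a}).toReal
      = ∫ t in Set.Ioc (0:ℝ) 1, ((Q {a | t ≤ g a}).toReal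
          + ((P {a | t ≤ g a}).toReal - (Q {a | t ≤ g a}).toReal)) := by
        congr 1; ext t; ring
    _ = (∫ t in Set.Ioc (0:ℝ) 1, (Q {a | t ≤ g a}).toReal)
          + ∫ t in Set.Ioc (0:ℝ) 1, ((P {a | t ≤ g a}).toReal - (Q {a | t ≤ g a}).toReal) :=
        integral_add (bdd Q) ((bdd P).sub (bdd Q))
    _ ≤ (∫ t in Set.Ioc (0:ℝ) 1, (Q {a | t ≤ g a}).toReal) + tvDist P Q := by
        gcongr
        calc ∫ t in Set.Ioc (0:ℝ) 1, ((P {a | t ≤ g a}).toReal - (Q {a | t ≤ g a}).toReal)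
            ≤ ∫ _t in Set.Ioc (0:ℝ) 1, tvDist P Q := by
              refine setIntegral_mono_on ((bdd P).sub (bdd Q)) ((integrableOn_const_iff (by simp)).2 ?_)
                measurableSet_Ioc key
              right; simp [Real.volume_Ioc]
          _ = tvDist P Q := by simp [Real.volume_Ioc]

lemma integrable_of_bdd {X : Type*} [MeasurableSpace X] (μ : Measure X)
    [IsProbabilityMeasure μ] {g : X → ℝ} (hg : Measurable g) (hb : ∀ x, |g x| ≤ 1) :
    Integrable g μ :=
  ⟨hg.aestronglyMeasurable, HasFiniteIntegral.of_bounded (C := 1)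
    (Filter.Eventually.of_forall fun x => by rw [Real.norm_eq_abs]; exact hb x)⟩

theorem multi_group_blind_impossibility {X : Type*} [MeasurableSpace X]
    {S : Type*} [Fintype S] [Nonempty S] (hcard : 2 ≤ Fintype.card S)
    (P : S → Measure X) [∀ s, IsProbabilityMeasure (P s)]
    (y : S → X → ℝ) (hy : ∀ s, Measurable (y s))
    (hy01 : ∀ s x, y s x ∈ Set.Icc (0:ℝ) 1)
    (h : X → ℝ) (hh : Measurable h) (hh01 : ∀ x, h x ∈ Set.Icc (0:ℝ) 1) :
    (⨆ s, risk (P s) (y s) h) ≥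
      (1 / (2 * (Fintype.card S - 1))) *
        ⨆ s, ∑ sbar : S,
          ((∫ x, |y s x - y sbar x| ∂(P s)) - tvDist (P s) (P sbar)) := by
  classical
  set M := ⨆ s, risk (P s) (y s) h with hMdef
  have habs : ∀ (a b : ℝ), a ∈ Set.Icc (0:ℝ) 1 → b ∈ Set.Icc (0:ℝ) 1 → |a - b| ≤ 1 := by
    intro a b ⟨ha0, ha1⟩ ⟨hb0, hb1⟩
    rw [abs_sub_le_iff]; constructor <;> linarith
  have hbdd : BddAbove (Set.range fun s => risk (P s) (y s) h) := Set.Finite.bddAbove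
    (Set.finite_range _)
  have hMle : ∀ s, risk (P s) (y s) h ≤ M := fun s => le_ciSup hbdd s
  have hrisk0 : ∀ s, 0 ≤ risk (P s) (y s) h := fun s =>
    integral_nonneg fun x => abs_nonneg _
  have hM0 : 0 ≤ M := (hrisk0 (Classical.arbitrary S)).trans (hMle _)
  -- key pairwise bound
  have key : ∀ s sbar, (∫ x, |y s x - y sbar x| ∂(P s)) - tvDist (P s) (P sbar)
      ≤ 2 * M := by
    intro s sbar
    have step1 : (∫ x, |y s x - y sbar x| ∂(P s))
        ≤ (∫ x, (|h x - y s x| + |h x - y sbar x|) ∂(P s)) := by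
      refine integral_mono (integrable_of_bdd _ ((hy s).sub (hy sbar)).abs
        (fun x => by rw [abs_abs]; exact habs _ _ (hy01 s x) (hy01 sbar x)))
        (Integrable.add
          (integrable_of_bdd _ (hh.sub (hy s)).abs
            (fun x => by rw [abs_abs]; exact habs _ _ (hh01 x) (hy01 s x)))
          (integrable_of_bdd _ (hh.sub (hy sbar)).abs
            (fun x => by rw [abs_abs]; exact habs _ _ (hh01 x) (hy01 sbar x))))
        (fun x => ?_)
      have := abs_sub (h x - y sbar x) (h x - y s x)
      calc |y s x - y sbar x| = |(h x - y sbar x) - (h x - y s x)| := by ring_nf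
        _ ≤ |h x - y sbar x| + |h x - y s x| := abs_sub _ _
        _ = |h x - y s x| + |h x - y sbar x| := add_comm _ _
    have step2 : (∫ x, (|h x - y s x| + |h x - y sbar x|) ∂(P s))
        = risk (P s) (y s) h + ∫ x, |h x - y sbar x| ∂(P s) := by
      rw [risk]
      exact integral_add
        (integrable_of_bdd _ (hh.sub (hy s)).abs
          (fun x => by rw [abs_abs]; exact habs _ _ (hh01 x) (hy01 s x)))
        (integrable_of_bdd _ (hh.sub (hy sbar)).abs
          (fun x => by rw [abs_abs]; exact habs _ _ (hh01 x) (hy01 sbar x)))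
    have step3 : (∫ x, |h x - y sbar x| ∂(P s))
        ≤ (∫ x, |h x - y sbar x| ∂(P sbar)) + tvDist (P s) (P sbar) :=
      integral_sub_le_tv (P s) (P sbar) _ (hh.sub (hy sbar)).abs
        (fun x => abs_nonneg _) (fun x => habs _ _ (hh01 x) (hy01 sbar x))
    have : (∫ x, |y s x - y sbar x| ∂(P s))
        ≤ risk (P s) (y s) h + risk (P sbar) (y sbar) h + tvDist (P s) (P sbar) := by
      have hr2 : risk (P sbar) (y sbar) h = ∫ x, |h x - y sbar x| ∂(P sbar) := rfl
      calc (∫ x, |y s x - y sbar x| ∂(P s)) ≤ _ := step1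
        _ = _ := step2
        _ ≤ _ := by linarith
    have := hMle s; have := hMle sbar
    linarith [hMle s, hMle sbar]
  -- the diagonal term is zero
  have diag : ∀ s : S, (∫ x, |y s x - y s x| ∂(P s)) - tvDist (P s) (P s) = 0 := by
    intro s; rw [tv_self]; simp
  -- sum bound
  have sumbd : ∀ s : S, (∑ sbar : S,
      ((∫ x, |y s x - y sbar x| ∂(P s)) - tvDist (P s) (P sbar)))
      ≤ (Fintype.card S - 1) * (2 * M) := by
    intro s
    rw [← Finset.sum_erase_add _ _ (Finset.mem_univ s), diag s, add_zero]
    calc (∑ sbar ∈ Finset.univ.erase s,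
        ((∫ x, |y s x - y sbar x| ∂(P s)) - tvDist (P s) (P sbar)))
        ≤ ∑ _sbar ∈ Finset.univ.erase s, 2 * M :=
          Finset.sum_le_sum fun sbar _ => key s sbar
      _ = ((Finset.univ.erase s).card : ℝ) * (2 * M) := by
          rw [Finset.sum_const, nsmul_eq_mul]
      _ = (Fintype.card S - 1) * (2 * M) := by
          rw [Finset.card_erase_of_mem (Finset.mem_univ s), Finset.card_univ]
          congr 1
          rw [Nat.cast_sub (by omega)]; simp
  have supbd : (⨆ s, ∑ sbar : S,
      ((∫ x, |y s x - y sbar x| ∂(P s)) - tvDist (P s) (P sbar)))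
      ≤ (Fintype.card S - 1) * (2 * M) := ciSup_le sumbd
  have hc : (2:ℝ) ≤ (Fintype.card S : ℝ) := by exact_mod_cast hcard
  have hpos : (0:ℝ) < 2 * ((Fintype.card S : ℝ) - 1) := by linarith
  rw [ge_iff_le]
  calc (1 / (2 * ((Fintype.card S:ℝ) - 1))) *
        (⨆ s, ∑ sbar : S, ((∫ x, |y s x - y sbar x| ∂(P s)) - tvDist (P s) (P sbar)))
      ≤ (1 / (2 * ((Fintype.card S:ℝ) - 1))) * (((Fintype.card S:ℝ) - 1) * (2 * M)) := by
        apply mul_le_mul_of_nonneg_left supbd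
        positivity
    _ = M := by
        have hne : ((Fintype.card S:ℝ) - 1) ≠ 0 := by linarith
        field_simp
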